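/- For every d ∈ ℕ, every η ∈ ℝ^d, and every A ∈ GL(d,ℝ): ∑_{k∈ℤ^d∖{0}} (1 + |η + A k|)^{-(d+1)} ≤ (d+1)·2^{3+4d}·(1+|η|)·max{‖A^{-1}‖, ‖A^{-1}‖^{d+1}}. -/

import Mathlib

open MeasureTheory Matrix
open scoped ENNReal

noncomputable section

/-- `ℝ^d` with the Euclidean norm. -/
abbrev Ed (d : ℕ) : Type := EuclideanSpace ℝ (Fin d)

/-- An integer vector, viewed as an element of `ℝ^d`. -/
def zVec {d : ℕ} (k : Fin d → ℤ) : Ed d := WithLp.toLp 2 (fun i => (k i : ℝ))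

/-- A matrix acting on `ℝ^d`. -/
def matVec {d : ℕ} (A : Matrix (Fin d) (Fin d) ℝ) (x : Ed d) : Ed d :=
  WithLp.toLp 2 (fun i => ∑ j, A i j * x j)

/-- The operator norm of a matrix, with respect to the Euclidean norm. -/
def matOpNorm {d : ℕ} (A : Matrix (Fin d) (Fin d) ℝ) : ℝ :=
  ⨆ x : Metric.closedBall (0 : Ed d) 1, ‖matVec A (x : Ed d)‖

lemma matVec_eq_lin {d : ℕ} (A : Matrix (Fin d) (Fin d) ℝ) (x : Ed d) :
    matVec A x = Matrix.toEuclideanLin A x := by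
  rw [Matrix.toEuclideanLin_apply]; rfl

lemma matVec_sub {d : ℕ} (A : Matrix (Fin d) (Fin d) ℝ) (x y : Ed d) :
    matVec A (x - y) = matVec A x - matVec A y := by
  simp only [matVec_eq_lin]; exact map_sub _ x y

lemma matVec_smul {d : ℕ} (A : Matrix (Fin d) (Fin d) ℝ) (c : ℝ) (x : Ed d) :
    matVec A (c • x) = c • matVec A x := by
  simp only [matVec_eq_lin]; exact map_smul _ c x

lemma matVec_zero {d : ℕ} (A : Matrix (Fin d) (Fin d) ℝ) : matVec A (0 : Ed d) = 0 := by
  rw [matVec_eq_lin]; exact map_zero _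

lemma coord_le_norm {d : ℕ} (x : Ed d) (i : Fin d) : |x i| ≤ ‖x‖ := by
  rw [EuclideanSpace.norm_eq, ← Real.sqrt_sq_eq_abs]
  apply Real.sqrt_le_sqrt
  have := Finset.single_le_sum (f := fun j => ‖x j‖ ^ 2) (fun j _ => by positivity)
    (Finset.mem_univ i)
  simpa [Real.norm_eq_abs, sq_abs] using this

lemma zVec_sub {d : ℕ} (k l : Fin d → ℤ) : zVec (k - l) = zVec k - zVec l := by
  ext i
  simp [zVec]

lemma one_le_norm_zVec {d : ℕ} {k : Fin d → ℤ} (hk : k ≠ 0) : 1 ≤ ‖zVec k‖ := by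
  obtain ⟨i, hi⟩ : ∃ i, k i ≠ 0 := by
    by_contra h; push_neg at h; exact hk (funext h)
  have h1 : (1 : ℝ) ≤ |(k i : ℝ)| := by
    rw [← Int.cast_abs]
    exact_mod_cast Int.one_le_abs hi
  calc (1:ℝ) ≤ |(zVec k) i| := h1
    _ ≤ ‖zVec k‖ := by
        rw [EuclideanSpace.norm_eq, ← Real.sqrt_sq_eq_abs]
        apply Real.sqrt_le_sqrt
        have := Finset.single_le_sum (f := fun j => ‖(zVec k) j‖ ^ 2)
          (fun j _ => by positivity) (Finset.mem_univ i)
        simpa [Real.norm_eq_abs, sq_abs] using this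

lemma matOpNorm_bdd {d : ℕ} (A : Matrix (Fin d) (Fin d) ℝ) :
    BddAbove (Set.range fun x : Metric.closedBall (0 : Ed d) 1 =>
      ‖matVec A (x : Ed d)‖) := by
  obtain ⟨C, hC⟩ : ∃ C, ∀ x : Ed d, ‖Matrix.toEuclideanLin A x‖ ≤ C * ‖x‖ :=
    ⟨_, (LinearMap.toContinuousLinearMap (Matrix.toEuclideanLin A)).le_opNorm⟩
  refine ⟨|C|, ?_⟩
  rintro r ⟨x, rfl⟩
  have hx : ‖(x : Ed d)‖ ≤ 1 := mem_closedBall_zero_iff.mp x.2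
  calc ‖matVec A (x : Ed d)‖ ≤ C * ‖(x:Ed d)‖ := by rw [matVec_eq_lin]; exact hC _
    _ ≤ |C| * 1 := mul_le_mul (le_abs_self C) hx (norm_nonneg _) (abs_nonneg C)
    _ = |C| := mul_one _

lemma matOpNorm_spec {d : ℕ} (A : Matrix (Fin d) (Fin d) ℝ) (y : Ed d) :
    ‖matVec A y‖ ≤ matOpNorm A * ‖y‖ := by
  rcases eq_or_ne y 0 with rfl | hy
  · simp [matVec_zero]
  · have hny : 0 < ‖y‖ := norm_pos_iff.mpr hy
    have hmem : (‖y‖⁻¹ • y) ∈ Metric.closedBall (0 : Ed d) 1 := by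
      rw [mem_closedBall_zero_iff, norm_smul, Real.norm_eq_abs,
        abs_of_pos (inv_pos.mpr hny), inv_mul_cancel₀ hny.ne']
    have := le_ciSup (matOpNorm_bdd A) ⟨_, hmem⟩
    rw [matVec_smul, norm_smul] at this
    simp only [Real.norm_eq_abs, abs_of_pos (inv_pos.mpr hny)] at this
    calc ‖matVec A y‖ = (‖y‖⁻¹ * ‖matVec A y‖) * ‖y‖ := by field_simp
      _ ≤ matOpNorm A * ‖y‖ := mul_le_mul_of_nonneg_right this hny.le

lemma matOpNorm_nonneg {d : ℕ} (A : Matrix (Fin d) (Fin d) ℝ) : 0 ≤ matOpNorm A := by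
  have hmem : (0 : Ed d) ∈ Metric.closedBall (0 : Ed d) 1 := by
    simp
  have := le_ciSup (matOpNorm_bdd A) ⟨_, hmem⟩
  exact le_trans (norm_nonneg _) this
lemma matVec_inv_matVec {d : ℕ} {A : Matrix (Fin d) (Fin d) ℝ} (hA : IsUnit A.det)
    (x : Ed d) : matVec A⁻¹ (matVec A x) = x := by
  have h1 : matVec A⁻¹ (matVec A x) = matVec (A⁻¹ * A) x := by
    simp only [matVec_eq_lin, Matrix.toEuclideanLin_apply]
    simp [Matrix.mulVec_mulVec]
  rw [h1, Matrix.nonsing_inv_mul A hA]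
  simp [matVec_eq_lin, Matrix.toEuclideanLin_apply]

lemma packing {d : ℕ} {δ R : ℝ} (hδ : 0 < δ) (hR : 0 ≤ R)
    {ι : Type} (F : Finset ι) (p : ι → Ed d) (c : Ed d)
    (hsep : ∀ i ∈ F, ∀ j ∈ F, i ≠ j → δ ≤ dist (p i) (p j))
    (hball : ∀ i ∈ F, p i ∈ Metric.closedBall c R) :
    (F.card : ℝ) * (δ/2)^d ≤ (R + δ/2)^d := by
  set μ := (volume : Measure (Ed d)) with hμ
  have hdisj : (F : Set ι).PairwiseDisjoint (fun i => Metric.ball (p i) (δ/2)) :=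
    fun i hi j hj hij => Metric.ball_disjoint_ball (by linarith [hsep i hi j hj hij])
  have hmeas : μ (⋃ i ∈ F, Metric.ball (p i) (δ/2))
      = ∑ i ∈ F, μ (Metric.ball (p i) (δ/2)) :=
    measure_biUnion_finset hdisj (fun i _ => measurableSet_ball)
  have hsub : (⋃ i ∈ F, Metric.ball (p i) (δ/2)) ⊆ Metric.closedBall c (R + δ/2) := by
    intro x hx
    simp only [Set.mem_iUnion] at hx
    obtain ⟨i, hi, hxi⟩ := hx
    rw [Metric.mem_ball] at hxi
    rw [Metric.mem_closedBall]
    have h2 := Metric.mem_closedBall.mp (hball i hi)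
    calc dist x c ≤ dist x (p i) + dist (p i) c := dist_triangle _ _ _
      _ ≤ R + δ/2 := by linarith
  have hrank : Module.finrank ℝ (Ed d) = d := finrank_euclideanSpace_fin
  set v := μ (Metric.ball (0 : Ed d) 1) with hv
  have hballvol : ∀ i, μ (Metric.ball (p i) (δ/2)) = ENNReal.ofReal ((δ/2)^d) * v := by
    intro i
    rw [Measure.addHaar_ball_of_pos μ (p i) (by linarith), hrank]
  have hcbvol : μ (Metric.closedBall c (R + δ/2)) = ENNReal.ofReal ((R+δ/2)^d) * v := by
    rw [Measure.addHaar_closedBall μ c (by linarith), hrank]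
  have hv0 : v ≠ 0 := (Metric.measure_ball_pos μ _ one_pos).ne'
  have hvt : v ≠ ⊤ := measure_ball_lt_top.ne
  have key : (F.card : ℝ≥0∞) * (ENNReal.ofReal ((δ/2)^d) * v)
      ≤ ENNReal.ofReal ((R+δ/2)^d) * v := by
    calc (F.card : ℝ≥0∞) * (ENNReal.ofReal ((δ/2)^d) * v)
        = ∑ i ∈ F, μ (Metric.ball (p i) (δ/2)) := by
          rw [Finset.sum_congr rfl (fun i _ => hballvol i), Finset.sum_const, nsmul_eq_mul]
      _ = μ (⋃ i ∈ F, Metric.ball (p i) (δ/2)) := hmeas.symm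
      _ ≤ μ (Metric.closedBall c (R + δ/2)) := measure_mono hsub
      _ = ENNReal.ofReal ((R+δ/2)^d) * v := hcbvol
  rw [← mul_assoc, ENNReal.mul_le_mul_iff_left hv0 hvt] at key
  have key2 : ENNReal.ofReal ((F.card : ℝ) * (δ/2)^d) ≤ ENNReal.ofReal ((R+δ/2)^d) := by
    rwa [ENNReal.ofReal_mul (by positivity), ENNReal.ofReal_natCast]
  exact (ENNReal.ofReal_le_ofReal_iff (by positivity)).mp key2

lemma finite_small {d : ℕ} (C : ℝ) : {k : Fin d → ℤ | ∀ i, |k i| ≤ ⌈C⌉}.Finite := by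
  have : {k : Fin d → ℤ | ∀ i, |k i| ≤ ⌈C⌉} ⊆ Set.pi Set.univ
      (fun _ : Fin d => Set.Icc (-⌈C⌉) ⌈C⌉) := by
    intro k hk i _
    exact abs_le.mp (hk i)
  exact Set.Finite.subset (Set.Finite.pi (fun i => Set.finite_Icc _ _)) this
lemma real_shell (d : ℕ) (hd : 1 ≤ d) (M E N t : ℝ) (hM : 0 < M) (hE : 0 ≤ E)
    (hN : 0 ≤ N) (ht : 1 ≤ t) (hne : 1 ≤ 2*t*M*(1+E)) (hcard : N ≤ (4*t*M+1)^d) :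
    N * (t^(d+1))⁻¹ ≤ 2^(3*d+1) * (M * max 1 (M^d) * (1+E)) * t⁻¹ := by
  have ht0 : (0:ℝ) < t := lt_of_lt_of_le one_pos ht
  have h1E : (1:ℝ) ≤ 1 + E := by linarith
  have hmax1 : (1:ℝ) ≤ max 1 (M^d) := le_max_left _ _
  have hmax : M^d ≤ M * max 1 (M^d) := by
    rcases le_total M 1 with h | h
    · have h1 : M^d ≤ M^1 := pow_le_pow_of_le_one hM.le h hd
      have h2 : M * 1 ≤ M * max 1 (M^d) := by
        apply mul_le_mul_of_nonneg_left hmax1 hM.le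
      simpa using h1.trans (by simpa using h2)
    · have h1 : M^d ≤ max 1 (M^d) := le_max_right _ _
      calc M^d = 1 * M^d := (one_mul _).symm
        _ ≤ M * max 1 (M^d) := mul_le_mul h (le_max_right _ _) (by positivity) hM.le
  rcases le_or_gt 1 (4*t*M) with h4 | h4
  · have hN2 : N ≤ (8*t*M)^d := hcard.trans (pow_le_pow_left₀ (by positivity) (by linarith) d)
    have hpow : ((8:ℝ)*t*M)^d = 8^d * t^d * M^d := by rw [mul_pow, mul_pow]
    have hfrac : t^d * (t^(d+1))⁻¹ = t⁻¹ := by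
      rw [pow_succ]
      field_simp
    calc N * (t^(d+1))⁻¹ ≤ (8*t*M)^d * (t^(d+1))⁻¹ :=
          mul_le_mul_of_nonneg_right hN2 (by positivity)
      _ = (8^d * M^d) * (t^d * (t^(d+1))⁻¹) := by rw [hpow]; ring
      _ = (8^d * M^d) * t⁻¹ := by rw [hfrac]
      _ ≤ 2^(3*d+1) * (M * max 1 (M^d) * (1+E)) * t⁻¹ := by
          apply mul_le_mul_of_nonneg_right _ (by positivity)
          have h8 : (8:ℝ)^d = 2^(3*d) := by
            rw [show (8:ℝ) = 2^3 by norm_num, ← pow_mul]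
          have h2p : (2:ℝ)^(3*d) ≤ 2^(3*d+1) := by
            apply pow_le_pow_right₀ (by norm_num) (by omega)
          have hMd : M^d ≤ M * max 1 (M^d) * (1+E) := by
            calc M^d ≤ M * max 1 (M^d) := hmax
              _ ≤ M * max 1 (M^d) * (1+E) := le_mul_of_one_le_right (by positivity) h1E
          calc 8^d * M^d = 2^(3*d) * M^d := by rw [h8]
            _ ≤ 2^(3*d+1) * (M * max 1 (M^d) * (1+E)) :=
                mul_le_mul h2p hMd (by positivity) (by positivity)
  · have hN2 : N ≤ 2^d := by
      refine hcard.trans ?_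
      apply pow_le_pow_left₀ (by positivity) (by linarith) d
    have htinv : t⁻¹ ≤ 2*M*(1+E) := by
      have h2 : t⁻¹ * (2*t*M*(1+E)) = 2*M*(1+E) := by field_simp
      calc t⁻¹ = t⁻¹ * 1 := (mul_one _).symm
        _ ≤ t⁻¹ * (2*t*M*(1+E)) := mul_le_mul_of_nonneg_left hne (by positivity)
        _ = 2*M*(1+E) := h2
    have htd : (t^(d+1))⁻¹ ≤ t⁻¹ * t⁻¹ := by
      have h1 : t*t ≤ t^(d+1) := by
        calc t*t = t^2 := (sq t).symm
          _ ≤ t^(d+1) := pow_le_pow_right₀ ht (by omega)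
      calc (t^(d+1))⁻¹ ≤ (t*t)⁻¹ := inv_anti₀ (by positivity) h1
        _ = t⁻¹ * t⁻¹ := mul_inv _ _
    calc N * (t^(d+1))⁻¹ ≤ 2^d * (t⁻¹ * t⁻¹) :=
          mul_le_mul hN2 htd (by positivity) (by positivity)
      _ = (2^d * t⁻¹) * t⁻¹ := by ring
      _ ≤ (2^d * (2*M*(1+E))) * t⁻¹ := by
          apply mul_le_mul_of_nonneg_right
            (mul_le_mul_of_nonneg_left htinv (by positivity)) (by positivity)
      _ ≤ 2^(3*d+1) * (M * max 1 (M^d) * (1+E)) * t⁻¹ := by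
          apply mul_le_mul_of_nonneg_right _ (by positivity)
          have hp : (2:ℝ)^(d+1) ≤ 2^(3*d+1) := pow_le_pow_right₀ (by norm_num) (by omega)
          calc (2:ℝ)^d * (2*M*(1+E)) = 2^(d+1) * (M*(1+E)) := by rw [pow_succ]; ring
            _ ≤ 2^(3*d+1) * (M*(1+E)) := mul_le_mul_of_nonneg_right hp (by positivity)
            _ ≤ 2^(3*d+1) * (M * max 1 (M^d) * (1+E)) := by
                apply mul_le_mul_of_nonneg_left _ (by positivity)
                have : M * 1 * (1+E) ≤ M * max 1 (M^d) * (1+E) := by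
                  apply mul_le_mul_of_nonneg_right _ (by linarith)
                  exact mul_le_mul_of_nonneg_left hmax1 hM.le
                simpa using this
/-- For every `d ∈ ℕ`, `η ∈ ℝ^d` and `A ∈ GL(d, ℝ)`:
`∑_{k ∈ ℤ^d ∖ {0}} (1 + |η + A k|)^{-(d+1)}
  ≤ (d+1) · 2^{3+4d} · (1 + |η|) · max {‖A⁻¹‖, ‖A⁻¹‖^{d+1}}`. -/
theorem stmt18 (d : ℕ) (η : Ed d) (A : Matrix (Fin d) (Fin d) ℝ) (hA : IsUnit A.det) :
    ∑' k : {k : Fin d → ℤ // k ≠ 0},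
        ENNReal.ofReal (((1 + ‖η + matVec A (zVec (k : Fin d → ℤ))‖) ^ (d + 1))⁻¹)
      ≤ ENNReal.ofReal
          (((d : ℝ) + 1) * 2 ^ (3 + 4 * d) * (1 + ‖η‖) *
            max (matOpNorm A⁻¹) (matOpNorm A⁻¹ ^ (d + 1))) := by
  classical
  rcases Nat.eq_zero_or_pos d with hd0 | hd
  · subst hd0
    haveI : IsEmpty {k : Fin 0 → ℤ // k ≠ 0} :=
      ⟨fun ⟨k, hk⟩ => hk (funext fun i => i.elim0)⟩
    rw [tsum_empty]
    exact zero_le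
  -- Notation
  set M := matOpNorm A⁻¹ with hMdef
  set E := ‖η‖ with hEdef
  have hE : 0 ≤ E := norm_nonneg _
  -- M > 0
  have hMnn : 0 ≤ M := matOpNorm_nonneg A⁻¹
  have hMpos : 0 < M := by
    set e : Ed d := EuclideanSpace.single ⟨0, hd⟩ (1:ℝ) with hedef
    have he : ‖e‖ = 1 := by rw [hedef, EuclideanSpace.norm_single]; norm_num
    have h1 : (1:ℝ) ≤ M * ‖matVec A e‖ := by
      have h := matOpNorm_spec A⁻¹ (matVec A e)
      rw [matVec_inv_matVec hA, he] at h
      exact h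
    by_contra hcon
    push_neg at hcon
    have : M * ‖matVec A e‖ ≤ 0 :=
      mul_nonpos_of_nonpos_of_nonneg (le_antisymm hcon hMnn).le (norm_nonneg _)
    linarith
  -- lower bound for lattice images
  have h_lb : ∀ k : Fin d → ℤ, k ≠ 0 → 1 ≤ M * ‖matVec A (zVec k)‖ := by
    intro k hk
    calc (1:ℝ) ≤ ‖zVec k‖ := one_le_norm_zVec hk
      _ = ‖matVec A⁻¹ (matVec A (zVec k))‖ := by rw [matVec_inv_matVec hA]
      _ ≤ M * ‖matVec A (zVec k)‖ := matOpNorm_spec _ _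
  set K := {k : Fin d → ℤ // k ≠ 0} with hKdef
  set pt : K → Ed d := fun k => matVec A (zVec (k : Fin d → ℤ)) with hptdef
  set g : K → ℝ := fun k => 1 + ‖η + pt k‖ with hgdef
  have hg1 : ∀ k, 1 ≤ g k := by
    intro k
    have := norm_nonneg (η + pt k)
    simp only [hgdef]
    linarith
  set f : K → ℝ≥0∞ := fun k => ENNReal.ofReal ((g k ^ (d+1))⁻¹) with hfdef
  -- shells
  set S : ℕ → Set K := fun j => {k | (2:ℝ)^j ≤ g k ∧ g k < 2 * (2:ℝ)^j} with hSdef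
  have hmemS : ∀ k : K, k ∈ S (Nat.log 2 ⌊g k⌋₊) := by
    intro k
    set n := ⌊g k⌋₊ with hn
    have hgn : 1 ≤ g k := hg1 k
    have hn1 : 1 ≤ n := Nat.le_floor (by exact_mod_cast hgn)
    simp only [hSdef, Set.mem_setOf_eq]
    constructor
    · calc ((2:ℝ)^(Nat.log 2 n)) = ((2^(Nat.log 2 n) : ℕ) : ℝ) := by push_cast; ring
        _ ≤ (n : ℝ) := by exact_mod_cast Nat.pow_log_le_self 2 (by omega)
        _ ≤ g k := Nat.floor_le (by linarith)
    · have h1 : n < 2^(Nat.log 2 n + 1) := Nat.lt_pow_succ_log_self (by norm_num) n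
      have h2 : g k < n + 1 := Nat.lt_floor_add_one _
      have h3 : (n:ℝ) + 1 ≤ 2^(Nat.log 2 n + 1) := by exact_mod_cast h1
      calc g k < (n:ℝ) + 1 := h2
        _ ≤ (2:ℝ)^(Nat.log 2 n + 1) := h3
        _ = 2 * 2^(Nat.log 2 n) := by rw [pow_succ]; ring
  -- finiteness of shells
  have hSfin : ∀ j, (S j).Finite := by
    intro j
    set C := M * (2 * (2:ℝ)^j + E) with hC
    have hsub : S j ⊆ Subtype.val ⁻¹' {k : Fin d → ℤ | ∀ i, |k i| ≤ ⌈C⌉} := by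
      rintro k ⟨hk1, hk2⟩
      intro i
      have hzb : ‖zVec (k : Fin d → ℤ)‖ ≤ C := by
        have h1 : ‖pt k‖ ≤ ‖η + pt k‖ + E := by
          have h0 := norm_sub_le (η + pt k) η
          rw [add_sub_cancel_left] at h0
          exact h0
        have h2 : ‖η + pt k‖ ≤ 2 * (2:ℝ)^j := by
          have := hg1 k
          simp only [hgdef] at hk2 ⊢
          linarith
        calc ‖zVec (k : Fin d → ℤ)‖
            = ‖matVec A⁻¹ (matVec A (zVec (k : Fin d → ℤ)))‖ := by
              rw [matVec_inv_matVec hA]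
          _ ≤ M * ‖pt k‖ := matOpNorm_spec _ _
          _ ≤ M * (2 * (2:ℝ)^j + E) := by
              apply mul_le_mul_of_nonneg_left _ hMnn
              linarith
      have hcoord : |((k : Fin d → ℤ) i : ℝ)| ≤ C :=
        le_trans (coord_le_norm (zVec (k : Fin d → ℤ)) i) hzb
      have : ((|((k : Fin d → ℤ) i)| : ℤ) : ℝ) ≤ (⌈C⌉ : ℝ) := by
        rw [Int.cast_abs]
        exact hcoord.trans (Int.le_ceil C)
      exact_mod_cast this
    exact Set.Finite.subset ((finite_small (d := d) C).preimage
      (Set.injOn_of_injective Subtype.val_injective)) hsub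
  set Fj : ℕ → Finset K := fun j => (hSfin j).toFinset with hFjdef
  -- pointwise domination by shell decomposition
  have hpt : ∀ k : K, f k ≤ ∑' j, Set.indicator (S j) f k := by
    intro k
    have h := ENNReal.le_tsum (f := fun j => Set.indicator (S j) f k) (Nat.log 2 ⌊g k⌋₊)
    rwa [Set.indicator_of_mem (hmemS k)] at h
  -- the constant
  set Kc := (2:ℝ)^(3*d+1) * (M * max 1 (M^d) * (1+E)) with hKc
  have hKcnn : 0 ≤ Kc := by
    have h1 : (0:ℝ) ≤ max 1 (M^d) := le_trans zero_le_one (le_max_left _ _)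
    positivity
  -- per-shell bound
  have hshell : ∀ j : ℕ, (∑' k : K, Set.indicator (S j) f k)
      ≤ ENNReal.ofReal (Kc * (2⁻¹)^j) := by
    intro j
    set t := (2:ℝ)^j with htdef
    have ht1 : (1:ℝ) ≤ t := one_le_pow₀ (by norm_num)
    have ht0 : (0:ℝ) < t := by linarith
    have hsum : (∑' k : K, Set.indicator (S j) f k) = ∑ k ∈ Fj j, Set.indicator (S j) f k := by
      apply tsum_eq_sum
      intro k hk
      apply Set.indicator_of_notMem
      rwa [hFjdef, Set.Finite.mem_toFinset] at hk
    rw [hsum]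
    have hterm : ∀ k ∈ Fj j, Set.indicator (S j) f k ≤ ENNReal.ofReal ((t^(d+1))⁻¹) := by
      intro k hk
      rw [hFjdef, Set.Finite.mem_toFinset] at hk
      rw [Set.indicator_of_mem hk]
      apply ENNReal.ofReal_le_ofReal
      apply inv_anti₀ (by positivity)
      exact pow_le_pow_left₀ ht0.le hk.1 _
    calc (∑ k ∈ Fj j, Set.indicator (S j) f k)
        ≤ (Fj j).card • ENNReal.ofReal ((t^(d+1))⁻¹) :=
          Finset.sum_le_card_nsmul _ _ _ hterm
      _ = ENNReal.ofReal (((Fj j).card : ℝ) * (t^(d+1))⁻¹) := by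
          rw [nsmul_eq_mul, ENNReal.ofReal_mul (by positivity), ENNReal.ofReal_natCast]
      _ ≤ ENNReal.ofReal (Kc * (2⁻¹)^j) := by
          apply ENNReal.ofReal_le_ofReal
          rcases Finset.eq_empty_or_nonempty (Fj j) with hFe | ⟨k₀, hk₀⟩
          · rw [hFe]
            simp only [Finset.card_empty, Nat.cast_zero, zero_mul]
            positivity
          · -- nonemptiness inequality
            have hk₀S : k₀ ∈ S j := by rwa [hFjdef, Set.Finite.mem_toFinset] at hk₀
            have hne1 : 1 ≤ 2*t*M*(1+E) := by
              have h1 : (1:ℝ) ≤ M * ‖pt k₀‖ := h_lb _ k₀.2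
              have h2 : ‖pt k₀‖ ≤ ‖η + pt k₀‖ + E := by
                have h0 := norm_sub_le (η + pt k₀) η
                rw [add_sub_cancel_left] at h0
                exact h0
              have h3 : ‖η + pt k₀‖ ≤ 2*t - 1 := by
                have := hk₀S.2
                simp only [hgdef] at this
                linarith
              have h4 : M * ‖pt k₀‖ ≤ M * (2*t - 1 + E) := by
                apply mul_le_mul_of_nonneg_left _ hMnn
                linarith
              have h5 : M * (2*t - 1 + E) ≤ 2*t*M*(1+E) := by
                nlinarith [mul_nonneg hMnn hE, mul_nonneg (mul_nonneg (by linarith : (0:ℝ) ≤ 2*t - 1) hMnn) hE]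
              linarith
            -- packing bound
            have hcard : ((Fj j).card : ℝ) ≤ (4*t*M+1)^d := by
              have hpack := packing (δ := 1/M) (R := 2*t) (by positivity) (by positivity)
                (Fj j) (fun k => pt k) (-η)
                (by
                  intro a ha b hb hab
                  rw [dist_eq_norm]
                  have hsub2 : pt a - pt b = matVec A (zVec ((a : Fin d → ℤ) - (b : Fin d → ℤ))) := by
                    rw [zVec_sub, matVec_sub]
                  rw [hsub2]
                  have hne2 : (a : Fin d → ℤ) - (b : Fin d → ℤ) ≠ 0 := by
                    intro hz
                    exact hab (Subtype.ext (by rwa [sub_eq_zero] at hz))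
                  have := h_lb _ hne2
                  rw [div_le_iff₀ hMpos]
                  linarith [this])
                (by
                  intro a ha
                  rw [hFjdef, Set.Finite.mem_toFinset] at ha
                  rw [Metric.mem_closedBall, dist_eq_norm, sub_neg_eq_add]
                  have h2 : ‖η + pt a‖ ≤ 2*t - 1 := by
                    have := ha.2
                    simp only [hgdef] at this
                    linarith
                  have : pt a + η = η + pt a := add_comm _ _
                  rw [this]
                  linarith)
              -- convert : card * b^d ≤ (2t + b)^d with b = (1/M)/2
              set b := (1/M)/2 with hb
              have hbpos : 0 < b := by positivity
              have hconv : ((Fj j).card : ℝ) ≤ ((2*t + b)/b)^d := by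
                rw [div_pow, le_div_iff₀ (by positivity)]
                exact hpack
              have heq2 : (2*t + b)/b = 4*t*M + 1 := by
                rw [hb]
                field_simp
                ring
              rwa [heq2] at hconv
            have := real_shell d hd M E ((Fj j).card : ℝ) t hMpos hE
              (by positivity) ht1 hne1 hcard
            calc ((Fj j).card : ℝ) * (t^(d+1))⁻¹
                ≤ 2^(3*d+1) * (M * max 1 (M^d) * (1+E)) * t⁻¹ := this
              _ = Kc * (2⁻¹)^j := by rw [hKc, htdef, ← inv_pow]
  -- geometric series
  have hgeo : (∑' j : ℕ, (ENNReal.ofReal (2⁻¹:ℝ))^j) = 2 := by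
    have h1 : ENNReal.ofReal (2⁻¹:ℝ) = (2:ℝ≥0∞)⁻¹ := by
      rw [ENNReal.ofReal_inv_of_pos (by norm_num)]
      norm_num
    rw [h1, ENNReal.tsum_geometric, ENNReal.one_sub_inv_two, inv_inv]
  -- final real inequality
  have hfinal : Kc * 2 ≤ ((d:ℝ)+1) * 2^(3+4*d) * (1+E) * max M (M^(d+1)) := by
    have hmm : M * max 1 (M^d) = max M (M^(d+1)) := by
      rw [mul_max_of_nonneg _ _ hMnn, mul_one, ← pow_succ']
    have hXnn : 0 ≤ max M (M^(d+1)) := le_trans hMnn (le_max_left _ _)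
    have hstep : (2:ℝ)^(3*d+2) ≤ ((d:ℝ)+1) * 2^(3+4*d) := by
      have h1 : (2:ℝ)^(3*d+2) ≤ 2^(3+4*d) := by
        apply pow_le_pow_right₀ (by norm_num) (by omega)
      have h2 : (1:ℝ) ≤ (d:ℝ)+1 := by
        have : (0:ℝ) ≤ (d:ℝ) := Nat.cast_nonneg d
        linarith
      nlinarith [pow_pos (show (0:ℝ) < 2 by norm_num) (3+4*d)]
    have hppow : (2:ℝ)^(3*d+1) * 2 = 2^(3*d+2) := by
      rw [← pow_succ]
    calc Kc * 2 = 2^(3*d+2) * ((1+E) * max M (M^(d+1))) := by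
          rw [hKc, hmm, ← hppow]; ring
      _ ≤ (((d:ℝ)+1) * 2^(3+4*d)) * ((1+E) * max M (M^(d+1))) := by
          apply mul_le_mul_of_nonneg_right hstep
          have : (0:ℝ) ≤ 1+E := by linarith
          positivity
      _ = ((d:ℝ)+1) * 2^(3+4*d) * (1+E) * max M (M^(d+1)) := by ring
  -- assemble
  have hLHSeq : (∑' k : {k : Fin d → ℤ // k ≠ 0},
      ENNReal.ofReal (((1 + ‖η + matVec A (zVec (k : Fin d → ℤ))‖) ^ (d + 1))⁻¹))
      = ∑' k : K, f k := by
    apply tsum_congr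
    intro k
    simp only [hfdef, hgdef, hptdef]
  rw [hLHSeq]
  calc (∑' k : K, f k)
      ≤ ∑' k : K, ∑' j : ℕ, Set.indicator (S j) f k := ENNReal.tsum_le_tsum hpt
    _ = ∑' j : ℕ, ∑' k : K, Set.indicator (S j) f k := ENNReal.tsum_comm
    _ ≤ ∑' j : ℕ, ENNReal.ofReal (Kc * (2⁻¹)^j) := ENNReal.tsum_le_tsum hshell
    _ = ∑' j : ℕ, ENNReal.ofReal Kc * (ENNReal.ofReal (2⁻¹:ℝ))^j := by
        apply tsum_congr
        intro j
        rw [ENNReal.ofReal_mul hKcnn, ENNReal.ofReal_pow (by norm_num)]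
    _ = ENNReal.ofReal Kc * ∑' j : ℕ, (ENNReal.ofReal (2⁻¹:ℝ))^j := ENNReal.tsum_mul_left
    _ = ENNReal.ofReal Kc * 2 := by rw [hgeo]
    _ = ENNReal.ofReal (Kc * 2) := by
        rw [ENNReal.ofReal_mul hKcnn]
        norm_num
    _ ≤ ENNReal.ofReal (((d:ℝ)+1) * 2^(3+4*d) * (1+E) * max M (M^(d+1))) :=
        ENNReal.ofReal_le_ofReal hfinal

end
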